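/- Leading principal minors of a block lower-triangular factorization: for a symmetric positive definite (p+q)×(p+q) matrix x = [[x_1, x_{21}ᵀ],[x_{21}, x_0]], and for each k ≤ p, the k-th leading principal minor of x equals the k-th leading principal minor of x_1; consequently the generalized power satisfies Δ_{(s',s'')}(x) = Δ_{s'}(x_1) · ∏_{k=1}^{q} Δ'_k(x)^{s''_k − s''_{k+1}} where Δ'_k(x) = Δ_{p+k}(x)/Δ_p(x_1)... In particular, Δ_s restricted to block-diagonal matrices diag(x_1, x_0) factors: Δ_{(s',s'')}(diag(x_1,x_0)) = Δ_{s'}(x_1) Δ_{s''}(x_0). -/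

import Mathlib

open Matrix

noncomputable section

/-- The determinant of the leading principal `k × k` submatrix of `x`. -/
def lpm {r : ℕ} (x : Matrix (Fin r) (Fin r) ℝ) (k : ℕ) (h : k ≤ r) : ℝ :=
  (x.submatrix (fun i : Fin k => Fin.castLE h i) (fun i : Fin k => Fin.castLE h i)).det

/-- The generalized power `Δ_s(x) = ∏ₖ Δₖ(x)^(sₖ - sₖ₊₁)` (convention `s_{r+1} = 0`). -/
def genPow {r : ℕ} (s : Fin r → ℝ) (x : Matrix (Fin r) (Fin r) ℝ) : ℝ :=
  ∏ k : Fin r, (lpm x (k.val + 1) k.isLt) ^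
    (s k - if h : k.val + 1 < r then s ⟨k.val + 1, h⟩ else 0)

namespace Stmt13Aux

open Real Finset

lemma lpm_self {r : ℕ} (x : Matrix (Fin r) (Fin r) ℝ) (h : r ≤ r) : lpm x r h = x.det := rfl

lemma posDef_submatrix {a b : Type*} [Fintype a] [Fintype b] [DecidableEq a] [DecidableEq b]
    {M : Matrix a a ℝ} (hM : M.PosDef) (f : b → a) (hf : Function.Injective f) :
    (M.submatrix f f).PosDef := by
  exact hM.submatrix hf

lemma lpm_pos {r : ℕ} {x : Matrix (Fin r) (Fin r) ℝ} (hx : x.PosDef) (k : ℕ) (h : k ≤ r) :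
    0 < lpm x k h :=
  (posDef_submatrix hx _ (Fin.castLE_injective h)).det_pos

lemma lpmA {p q : ℕ} (x1 : Matrix (Fin p) (Fin p) ℝ) (B : Matrix (Fin p) (Fin q) ℝ)
    (C : Matrix (Fin q) (Fin p) ℝ) (x0 : Matrix (Fin q) (Fin q) ℝ)
    (k : ℕ) (hk : k ≤ p) (h : k ≤ p + q) :
    lpm ((fromBlocks x1 B C x0).reindex finSumFinEquiv finSumFinEquiv) k h = lpm x1 k hk := by
  unfold lpm
  congr 1
  ext i j
  show (fromBlocks x1 B C x0) (finSumFinEquiv.symm (Fin.castAdd q (Fin.castLE hk i)))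
      (finSumFinEquiv.symm (Fin.castAdd q (Fin.castLE hk j))) = x1 _ _
  rw [finSumFinEquiv_symm_apply_castAdd, finSumFinEquiv_symm_apply_castAdd]
  rfl

lemma lpmB {p q : ℕ} (x1 : Matrix (Fin p) (Fin p) ℝ) (x0 : Matrix (Fin q) (Fin q) ℝ)
    (m : ℕ) (hm : m ≤ q) (h : p + m ≤ p + q) :
    lpm ((fromBlocks x1 (0 : Matrix (Fin p) (Fin q) ℝ) (0 : Matrix (Fin q) (Fin p) ℝ) x0).reindex
        finSumFinEquiv finSumFinEquiv) (p + m) h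
      = x1.det * lpm x0 m hm := by
  unfold lpm
  rw [← Matrix.det_submatrix_equiv_self (finSumFinEquiv : Fin p ⊕ Fin m ≃ Fin (p + m))]
  rw [Matrix.submatrix_submatrix]
  have key : ((fromBlocks x1 (0 : Matrix (Fin p) (Fin q) ℝ) (0 : Matrix (Fin q) (Fin p) ℝ)
        x0).reindex finSumFinEquiv finSumFinEquiv).submatrix
        ((fun i : Fin (p+m) => Fin.castLE h i) ∘ ⇑(finSumFinEquiv : Fin p ⊕ Fin m ≃ Fin (p+m)))
        ((fun i : Fin (p+m) => Fin.castLE h i) ∘ ⇑(finSumFinEquiv : Fin p ⊕ Fin m ≃ Fin (p+m)))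
      = fromBlocks x1 0 0 (x0.submatrix (Fin.castLE hm) (Fin.castLE hm)) := by
    ext i j
    rcases i with a | a <;> rcases j with b | b
    · show (fromBlocks x1 _ _ x0) (finSumFinEquiv.symm (Fin.castAdd q a))
        (finSumFinEquiv.symm (Fin.castAdd q b)) = x1 a b
      rw [finSumFinEquiv_symm_apply_castAdd, finSumFinEquiv_symm_apply_castAdd]
      rfl
    · show (fromBlocks x1 _ _ x0) (finSumFinEquiv.symm (Fin.castAdd q a))
        (finSumFinEquiv.symm (Fin.natAdd p (Fin.castLE hm b))) = (0 : Matrix _ _ ℝ) a b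
      rw [finSumFinEquiv_symm_apply_castAdd, finSumFinEquiv_symm_apply_natAdd]
      rfl
    · show (fromBlocks x1 _ _ x0) (finSumFinEquiv.symm (Fin.natAdd p (Fin.castLE hm a)))
        (finSumFinEquiv.symm (Fin.castAdd q b)) = (0 : Matrix _ _ ℝ) a b
      rw [finSumFinEquiv_symm_apply_castAdd, finSumFinEquiv_symm_apply_natAdd]
      rfl
    · show (fromBlocks x1 _ _ x0) (finSumFinEquiv.symm (Fin.natAdd p (Fin.castLE hm a)))
        (finSumFinEquiv.symm (Fin.natAdd p (Fin.castLE hm b)))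
        = x0 (Fin.castLE hm a) (Fin.castLE hm b)
      rw [finSumFinEquiv_symm_apply_natAdd, finSumFinEquiv_symm_apply_natAdd]
      rfl
  rw [key, Matrix.det_fromBlocks_zero₂₁]

/-- total version of `lpm` -/
def lpm' {r : ℕ} (x : Matrix (Fin r) (Fin r) ℝ) : ℕ → ℝ :=
  fun k => if h : k ≤ r then lpm x k h else 1

/-- total version of `s` -/
def ext' {r : ℕ} (s : Fin r → ℝ) : ℕ → ℝ :=
  fun k => if h : k < r then s ⟨k, h⟩ else 0

lemma lpm'_pos {r : ℕ} {x : Matrix (Fin r) (Fin r) ℝ} (hx : x.PosDef) (k : ℕ) :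
    0 < lpm' x k := by
  unfold lpm'
  split
  · exact lpm_pos hx _ _
  · exact one_pos

lemma genPow_eq_exp {r : ℕ} (s : Fin r → ℝ) (x : Matrix (Fin r) (Fin r) ℝ)
    (hx : ∀ k (h : k ≤ r), 0 < lpm x k h) :
    genPow s x
      = Real.exp (∑ k ∈ range r, Real.log (lpm' x (k+1)) * (ext' s k - ext' s (k+1))) := by
  unfold genPow
  rw [← Fin.sum_univ_eq_sum_range
    (fun k => Real.log (lpm' x (k+1)) * (ext' s k - ext' s (k+1))) r, Real.exp_sum]
  refine Finset.prod_congr rfl fun k _ => ?_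
  rw [Real.rpow_def_of_pos (hx _ k.isLt)]
  have h1 : lpm' x (k.val+1) = lpm x (k.val+1) k.isLt := dif_pos k.isLt
  have h2 : ext' s k.val = s k := by simp [ext', k.isLt]
  have h3 : ext' s (k.val+1)
      = if h : k.val + 1 < r then s ⟨k.val + 1, h⟩ else 0 := rfl
  rw [h1, h2, h3]

lemma sum_boundary (p : ℕ) (c : ℝ) :
    (∑ k ∈ range p, if k + 1 = p then c else 0) = if p = 0 then 0 else c := by
  cases p with
  | zero => simp
  | succ n =>
    rw [Finset.sum_range_succ]
    have h : ∀ k ∈ range n, (if k + 1 = n + 1 then c else 0) = 0 := by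
      intro k hk
      rw [if_neg]
      simp only [mem_range] at hk
      omega
    rw [Finset.sum_congr rfl h, Finset.sum_const_zero, zero_add, if_pos rfl,
      if_neg (Nat.succ_ne_zero n)]

end Stmt13Aux

open Stmt13Aux Real Finset

theorem stmt_13 (p q : ℕ)
    (x1 : Matrix (Fin p) (Fin p) ℝ) (x0 : Matrix (Fin q) (Fin q) ℝ)
    (x21 : Matrix (Fin q) (Fin p) ℝ)
    (h1 : x1.IsSymm) (h1p : x1.PosDef) (h0 : x0.IsSymm) (h0p : x0.PosDef)
    (hx : ((Matrix.fromBlocks x1 x21ᵀ x21 x0).reindex finSumFinEquiv finSumFinEquiv).PosDef)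
    (s' : Fin p → ℝ) (s'' : Fin q → ℝ) :
    (∀ (k : ℕ) (hk : k ≤ p),
      lpm ((Matrix.fromBlocks x1 x21ᵀ x21 x0).reindex finSumFinEquiv finSumFinEquiv) k
          (hk.trans (Nat.le_add_right p q)) = lpm x1 k hk) ∧
    genPow (Fin.append s' s'')
        ((Matrix.fromBlocks x1 0 0 x0).reindex finSumFinEquiv finSumFinEquiv) =
      genPow s' x1 * genPow s'' x0 := by
  constructor
  · intro k hk
    exact lpmA x1 x21ᵀ x21 x0 k hk _
  · have hD1 : 0 < x1.det := h1p.det_pos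
    have hL1 : ∀ k, 0 < lpm' x1 k := fun k => lpm'_pos h1p k
    have hL0 : ∀ k, 0 < lpm' x0 k := fun k => lpm'_pos h0p k
    have hbigpos : ∀ k (h : k ≤ p + q),
        0 < lpm ((Matrix.fromBlocks x1 0 0 x0).reindex finSumFinEquiv finSumFinEquiv) k h := by
      intro k hk
      rcases le_or_gt k p with h | h
      · rw [lpmA x1 0 0 x0 k h]
        exact lpm_pos h1p _ _
      · obtain ⟨m, rfl⟩ : ∃ m, k = p + m := ⟨k - p, by omega⟩
        have hm : m ≤ q := by omega
        rw [lpmB x1 x0 m hm]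
        exact mul_pos hD1 (lpm_pos h0p _ _)
    rw [genPow_eq_exp _ _ hbigpos, genPow_eq_exp _ _ (fun k h => lpm_pos h1p k h),
      genPow_eq_exp _ _ (fun k h => lpm_pos h0p k h), ← Real.exp_add]
    congr 1
    set big := (Matrix.fromBlocks x1 (0 : Matrix (Fin p) (Fin q) ℝ)
      (0 : Matrix (Fin q) (Fin p) ℝ) x0).reindex finSumFinEquiv finSumFinEquiv with hbig
    set F := ext' (Fin.append s' s'') with hF
    set G := ext' s' with hG
    set H := ext' s'' with hH
    -- basic facts about F, G, H
    have hFG : ∀ k, k < p → F k = G k := by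
      intro k hk
      rw [hF, hG]
      unfold ext'
      rw [dif_pos (hk.trans_le (Nat.le_add_right p q)), dif_pos hk]
      exact Fin.append_left s' s'' ⟨k, hk⟩
    have hFH : ∀ j, F (p + j) = H j := by
      intro j
      rw [hF, hH]
      unfold ext'
      by_cases hj : j < q
      · rw [dif_pos (by omega : p + j < p + q), dif_pos hj]
        exact Fin.append_right s' s'' ⟨j, hj⟩
      · rw [dif_neg (by omega), dif_neg hj]
    have hGp : G p = 0 := dif_neg (lt_irrefl p)
    have hHq : H q = 0 := dif_neg (lt_irrefl q)
    have hL1det : lpm' x1 p = x1.det := by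
      unfold lpm'
      rw [dif_pos le_rfl]
      rfl
    -- relating lpm' of the big matrix to the blocks
    have hLBL1 : ∀ k, k ≤ p → lpm' big k = lpm' x1 k := by
      intro k hk
      rw [hbig]
      unfold lpm'
      rw [dif_pos (hk.trans (Nat.le_add_right p q)), dif_pos hk, lpmA x1 0 0 x0 k hk]
    have hLBL0 : ∀ m, m ≤ q → lpm' big (p + m) = x1.det * lpm' x0 m := by
      intro m hm
      rw [hbig]
      unfold lpm'
      rw [dif_pos (Nat.add_le_add_left hm p), dif_pos hm, lpmB x1 x0 m hm]
    -- split the sum over range (p+q)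
    rw [← Fin.sum_univ_eq_sum_range
      (fun k => Real.log (lpm' big (k+1)) * (F k - F (k+1))) (p + q),
      Fin.sum_univ_add]
    simp only [Fin.coe_castAdd, Fin.coe_natAdd]
    rw [Fin.sum_univ_eq_sum_range
      (fun k => Real.log (lpm' big (k+1)) * (F k - F (k+1))) p,
      Fin.sum_univ_eq_sum_range
      (fun j => Real.log (lpm' big (p+j+1)) * (F (p+j) - F (p+j+1))) q]
    -- rewrite the second block sum
    have hB : ∀ j ∈ range q, Real.log (lpm' big (p+j+1)) * (F (p+j) - F (p+j+1))
        = Real.log x1.det * (H j - H (j+1))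
          + Real.log (lpm' x0 (j+1)) * (H j - H (j+1)) := by
      intro j hj
      simp only [mem_range] at hj
      rw [Nat.add_assoc p j 1, hLBL0 (j+1) (by omega),
        Real.log_mul (ne_of_gt hD1) (ne_of_gt (hL0 _)), hFH j, hFH (j+1), add_mul]
    rw [Finset.sum_congr rfl hB, Finset.sum_add_distrib, ← Finset.mul_sum,
      sum_range_sub' H q, hHq, sub_zero]
    -- rewrite the first block sum
    have hA : ∀ k ∈ range p, Real.log (lpm' big (k+1)) * (F k - F (k+1))
        = Real.log (lpm' x1 (k+1)) * (G k - G (k+1))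
          - (if k + 1 = p then H 0 * Real.log (lpm' x1 p) else 0) := by
      intro k hk
      simp only [mem_range] at hk
      rw [hLBL1 (k+1) (by omega), hFG k hk]
      rcases eq_or_lt_of_le (Nat.succ_le_of_lt hk) with he | hlt
      · have he' : k + 1 = p := he
        have hFp : F (k+1) = H 0 := by
          rw [he']
          have := hFH 0
          rwa [Nat.add_zero] at this
        rw [if_pos he', hFp, he', hGp]
        ring
      · rw [if_neg (by omega), hFG (k+1) hlt, sub_zero]
    rw [Finset.sum_congr rfl hA, Finset.sum_sub_distrib, sum_boundary p (H 0 * Real.log (lpm' x1 p))]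
    have hcorr : (if p = 0 then 0 else H 0 * Real.log (lpm' x1 p)) = Real.log x1.det * H 0 := by
      by_cases hp : p = 0
      · subst hp
        rw [if_pos rfl]
        have : x1.det = 1 := Matrix.det_isEmpty
        rw [this, Real.log_one, zero_mul]
      · rw [if_neg hp, hL1det]
        ring
    rw [hcorr]
    ring
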